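/- Let A be an ℕ-filtered associative algebra with no zero divisors such that dim A^{(i)} is asymptotically equivalent to a_0 i^k for some a_0 > 0 and k ∈ ℕ as i → ∞ (polynomial growth). Then A is an Ore domain: any two nonzero elements of A have a common nonzero right multiple and a common nonzero left multiple. -/

import Mathlib

open Filter

/-- Auxiliary analytic fact: `(n : ℝ)^k / (n + d)^k → 1`. -/
private lemma aux_ratio_tendsto (k d : ℕ) :
    Tendsto (fun n : ℕ => ((n : ℝ)) ^ k / ((n : ℝ) + (d : ℕ)) ^ k) atTop (nhds 1) := by
  have h0 : Tendsto (fun n : ℕ => (d : ℝ) / ((n : ℝ) + (d : ℕ))) atTop (nhds 0) := by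
    have := (tendsto_const_div_atTop_nhds_zero_nat (d : ℝ)).comp (tendsto_add_atTop_nat d)
    refine this.congr (fun n => ?_)
    simp only [Function.comp_apply]
    push_cast
    ring
  have h1 : Tendsto (fun n : ℕ => (n : ℝ) / ((n : ℝ) + (d : ℕ))) atTop (nhds 1) := by
    have h2 : Tendsto (fun n : ℕ => 1 - (d : ℝ) / ((n : ℝ) + (d : ℕ))) atTop (nhds 1) := by
      simpa using (tendsto_const_nhds (x := (1 : ℝ))).sub h0
    refine h2.congr' ?_
    filter_upwards [eventually_ge_atTop 1] with n hn
    have hpos : (0 : ℝ) < (n : ℝ) + (d : ℕ) := by positivity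
    field_simp
    ring
  have := h1.pow k
  simpa [div_pow] using this

/-- Auxiliary lemma: given the polynomial growth of `F`, if `P n` and `Q n` are families of
submodules each of the same finrank as `F n` and with `P n ⊔ Q n ≤ F (n + d)`, then some
`P n ⊓ Q n` is nontrivial. -/
private lemma aux_exists_inter {A : Type*} [Ring A] [Algebra ℂ A]
    (F : ℕ → Submodule ℂ A)
    (hfin : ∀ i, FiniteDimensional ℂ (F i))
    (a₀ : ℝ) (ha₀ : 0 < a₀) (k : ℕ)
    (hgrowth : Tendsto (fun i : ℕ =>
      (Module.finrank ℂ (F i) : ℝ) / (a₀ * (i : ℝ) ^ k)) atTop (nhds 1))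
    (d : ℕ) (P Q : ℕ → Submodule ℂ A)
    (hP : ∀ n, Module.finrank ℂ (P n) = Module.finrank ℂ (F n))
    (hQ : ∀ n, Module.finrank ℂ (Q n) = Module.finrank ℂ (F n))
    (hPQ : ∀ n, P n ⊔ Q n ≤ F (n + d)) :
    ∃ n, P n ⊓ Q n ≠ ⊥ := by
  by_contra hcon
  push_neg at hcon
  -- dimension count: 2 * dim F n ≤ dim F (n + d)
  have key : ∀ n, 2 * Module.finrank ℂ (F n) ≤ Module.finrank ℂ (F (n + d)) := by
    intro n
    haveI : FiniteDimensional ℂ (F (n + d)) := hfin _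
    haveI : FiniteDimensional ℂ (P n) :=
      Submodule.finiteDimensional_of_le (le_trans le_sup_left (hPQ n))
    haveI : FiniteDimensional ℂ (Q n) :=
      Submodule.finiteDimensional_of_le (le_trans le_sup_right (hPQ n))
    have hsum := Submodule.finrank_sup_add_finrank_inf_eq (P n) (Q n)
    rw [hcon n] at hsum
    simp only [finrank_bot, add_zero, hP n, hQ n] at hsum
    calc 2 * Module.finrank ℂ (F n) = Module.finrank ℂ ↑(P n ⊔ Q n) := by
          rw [hsum]; ring
      _ ≤ Module.finrank ℂ (F (n + d)) := Submodule.finrank_mono (hPQ n)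
  -- analytic contradiction
  set f : ℕ → ℝ := fun n => (Module.finrank ℂ (F n) : ℝ) with hf
  have hL : Tendsto (fun n : ℕ =>
      (f n / (a₀ * (n : ℝ) ^ k)) * (2 * ((n : ℝ) ^ k / ((n : ℝ) + (d : ℕ)) ^ k)))
      atTop (nhds 2) := by
    have := hgrowth.mul ((aux_ratio_tendsto k d).const_mul 2)
    simpa using this
  have hR : Tendsto (fun n : ℕ => f (n + d) / (a₀ * ((n + d : ℕ) : ℝ) ^ k)) atTop (nhds 1) :=
    hgrowth.comp (tendsto_add_atTop_nat d)
  have hle : ∀ᶠ n : ℕ in atTop,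
      (f n / (a₀ * (n : ℝ) ^ k)) * (2 * ((n : ℝ) ^ k / ((n : ℝ) + (d : ℕ)) ^ k))
        ≤ f (n + d) / (a₀ * ((n + d : ℕ) : ℝ) ^ k) := by
    filter_upwards [eventually_ge_atTop 1] with n hn
    have hnpos : (0 : ℝ) < (n : ℝ) := by exact_mod_cast hn
    have hndpos : (0 : ℝ) < (n : ℝ) + (d : ℕ) := by positivity
    have hcast : ((n + d : ℕ) : ℝ) = (n : ℝ) + (d : ℕ) := by push_cast; ring
    have h2f : 2 * f n ≤ f (n + d) := by
      simp only [hf]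
      exact_mod_cast key n
    rw [hcast]
    have hxpos : (0 : ℝ) < a₀ * ((n : ℝ) + (d : ℕ)) ^ k := by positivity
    have heq : (f n / (a₀ * (n : ℝ) ^ k)) * (2 * ((n : ℝ) ^ k / ((n : ℝ) + (d : ℕ)) ^ k))
        = (2 * f n) / (a₀ * ((n : ℝ) + (d : ℕ)) ^ k) := by
      field_simp
    rw [heq]
    gcongr
  have := le_of_tendsto_of_tendsto hL hR hle
  linarith

/-- An ℕ-filtered associative algebra with no zero divisors whose filtration has
polynomial growth (`dim A^{(i)} ~ a₀ i^k`) is an Ore domain: any two nonzero elements have a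
common nonzero right multiple and a common nonzero left multiple. -/
theorem polynomial_growth_implies_Ore
    (A : Type*) [Ring A] [Algebra ℂ A]
    (hnzd : ∀ x y : A, x * y = 0 → x = 0 ∨ y = 0)
    -- the filtration
    (F : ℕ → Submodule ℂ A)
    (hmono : ∀ i, F i ≤ F (i + 1))
    (hmul : ∀ i j, ∀ x ∈ F i, ∀ y ∈ F j, x * y ∈ F (i + j))
    (hexh : ∀ a : A, ∃ i, a ∈ F i)
    (hfin : ∀ i, FiniteDimensional ℂ (F i))
    -- polynomial growth: dim A^{(i)} ~ a₀ i^k as i → ∞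
    (a₀ : ℝ) (ha₀ : 0 < a₀) (k : ℕ)
    (hgrowth : Tendsto (fun i : ℕ =>
      (Module.finrank ℂ (F i) : ℝ) / (a₀ * (i : ℝ) ^ k)) atTop (nhds 1)) :
    ∀ a b : A, a ≠ 0 → b ≠ 0 →
      (∃ u v : A, a * u = b * v ∧ a * u ≠ 0) ∧
      (∃ u v : A, u * a = v * b ∧ u * a ≠ 0) := by
  have hFmono : Monotone F := monotone_nat_of_le_succ hmono
  intro a b ha hb
  obtain ⟨da, hda⟩ := hexh a
  obtain ⟨db, hdb⟩ := hexh b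
  set d := max da db with hd
  have haF : a ∈ F d := hFmono (le_max_left da db) hda
  have hbF : b ∈ F d := hFmono (le_max_right da db) hdb
  -- injectivity of left/right multiplication
  have hinjL : ∀ c : A, c ≠ 0 → Function.Injective (LinearMap.mulLeft ℂ c) := by
    intro c hc x y hxy
    simp only [LinearMap.mulLeft_apply] at hxy
    have : c * (x - y) = 0 := by rw [mul_sub, hxy, sub_self]
    rcases hnzd c (x - y) this with h | h
    · exact absurd h hc
    · exact sub_eq_zero.mp h
  have hinjR : ∀ c : A, c ≠ 0 → Function.Injective (LinearMap.mulRight ℂ c) := by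
    intro c hc x y hxy
    simp only [LinearMap.mulRight_apply] at hxy
    have : (x - y) * c = 0 := by rw [sub_mul, hxy, sub_self]
    rcases hnzd (x - y) c this with h | h
    · exact sub_eq_zero.mp h
    · exact absurd h hc
  constructor
  · -- right multiples: a * u = b * v
    set P : ℕ → Submodule ℂ A := fun n => (F n).map (LinearMap.mulLeft ℂ a)
    set Q : ℕ → Submodule ℂ A := fun n => (F n).map (LinearMap.mulLeft ℂ b)
    have hP : ∀ n, Module.finrank ℂ (P n) = Module.finrank ℂ (F n) := fun n =>
      (Submodule.equivMapOfInjective _ (hinjL a ha) (F n)).finrank_eq.symm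
    have hQ : ∀ n, Module.finrank ℂ (Q n) = Module.finrank ℂ (F n) := fun n =>
      (Submodule.equivMapOfInjective _ (hinjL b hb) (F n)).finrank_eq.symm
    have hPQ : ∀ n, P n ⊔ Q n ≤ F (n + d) := by
      intro n
      apply sup_le
      · rintro _ ⟨x, hx, rfl⟩
        simpa [LinearMap.mulLeft_apply, Nat.add_comm] using hmul d n a haF x hx
      · rintro _ ⟨x, hx, rfl⟩
        simpa [LinearMap.mulLeft_apply, Nat.add_comm] using hmul d n b hbF x hx
    obtain ⟨n, hn⟩ := aux_exists_inter F hfin a₀ ha₀ k hgrowth d P Q hP hQ hPQ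
    obtain ⟨z, hz, hz0⟩ := Submodule.exists_mem_ne_zero_of_ne_bot hn
    obtain ⟨u, _, hu⟩ := hz.1
    obtain ⟨v, _, hv⟩ := hz.2
    exact ⟨u, v, by simp only [LinearMap.mulLeft_apply] at hu hv; rw [hu, hv], by
      simp only [LinearMap.mulLeft_apply] at hu; rw [hu]; exact hz0⟩
  · -- left multiples: u * a = v * b
    set P : ℕ → Submodule ℂ A := fun n => (F n).map (LinearMap.mulRight ℂ a)
    set Q : ℕ → Submodule ℂ A := fun n => (F n).map (LinearMap.mulRight ℂ b)
    have hP : ∀ n, Module.finrank ℂ (P n) = Module.finrank ℂ (F n) := fun n =>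
      (Submodule.equivMapOfInjective _ (hinjR a ha) (F n)).finrank_eq.symm
    have hQ : ∀ n, Module.finrank ℂ (Q n) = Module.finrank ℂ (F n) := fun n =>
      (Submodule.equivMapOfInjective _ (hinjR b hb) (F n)).finrank_eq.symm
    have hPQ : ∀ n, P n ⊔ Q n ≤ F (n + d) := by
      intro n
      apply sup_le
      · rintro _ ⟨x, hx, rfl⟩
        simpa [LinearMap.mulRight_apply] using hmul n d x hx a haF
      · rintro _ ⟨x, hx, rfl⟩
        simpa [LinearMap.mulRight_apply] using hmul n d x hx b hbF
    obtain ⟨n, hn⟩ := aux_exists_inter F hfin a₀ ha₀ k hgrowth d P Q hP hQ hPQ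
    obtain ⟨z, hz, hz0⟩ := Submodule.exists_mem_ne_zero_of_ne_bot hn
    obtain ⟨u, _, hu⟩ := hz.1
    obtain ⟨v, _, hv⟩ := hz.2
    exact ⟨u, v, by simp only [LinearMap.mulRight_apply] at hu hv; rw [hu, hv], by
      simp only [LinearMap.mulRight_apply] at hu; rw [hu]; exact hz0⟩
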